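/- arXiv:2206.06484 — 2 statements merged into one kernel-verified Lean document; each statement's English description precedes it below -/
import Mathlib

section
/- For any measurable m : Ω → [0,1] and t ∈ (0,1], a segmentation s belongs to ∪_{v ∈ [F_m(t-), F_m(t)]} S_{m,v} if and only if 1{m(ω) > 1-t} ≤ s(ω) ≤ 1{m(ω) ≥ 1-t} for λ-almost every ω. -/
open MeasureTheory Set

noncomputable section

/-- Normalized Lebesgue measure on the unit cube `[0,1]^n`. -/
def cubeMeasure (n : ℕ) : Measure (Fin n → ℝ) :=
  volume.restrict (Set.univ.pi fun _ => Set.Icc (0:ℝ) 1)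

/-- A segmentation: a measurable `{0,1}`-valued function on the cube. -/
def IsSeg {n : ℕ} (s : (Fin n → ℝ) → ℝ) : Prop :=
  Measurable s ∧ ∀ ω, s ω = 0 ∨ s ω = 1

/-- A marginal function: a measurable `[0,1]`-valued function on the cube. -/
def IsMarg {n : ℕ} (m : (Fin n → ℝ) → ℝ) : Prop :=
  Measurable m ∧ ∀ ω, m ω ∈ Set.Icc (0:ℝ) 1

/-- The volume `‖f‖₁ = ∫ f dλ` (for nonnegative `f`). -/
def vol {n : ℕ} (f : (Fin n → ℝ) → ℝ) : ℝ := ∫ ω, f ω ∂(cubeMeasure n)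

/-- `F_m(t) = λ({ω : 1 - m(ω) ≤ t})`. -/
def Fcdf {n : ℕ} (m : (Fin n → ℝ) → ℝ) (t : ℝ) : ℝ :=
  ((cubeMeasure n) {ω | 1 - m ω ≤ t}).toReal

/-- The left limit `F_m(t-) = λ({ω : 1 - m(ω) < t})`. -/
def FcdfMinus {n : ℕ} (m : (Fin n → ℝ) → ℝ) (t : ℝ) : ℝ :=
  ((cubeMeasure n) {ω | 1 - m ω < t}).toReal

/-- The generalized inverse (quantile function) `F_m⁻¹(v) = inf{t ∈ [0,1] : F_m(t) ≥ v}`. -/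
def Finv {n : ℕ} (m : (Fin n → ℝ) → ℝ) (v : ℝ) : ℝ :=
  sInf {t | t ∈ Set.Icc (0:ℝ) 1 ∧ v ≤ Fcdf m t}

/-- The class `S_{m,v}`. -/
def Smv {n : ℕ} (m : (Fin n → ℝ) → ℝ) (v : ℝ) (s : (Fin n → ℝ) → ℝ) : Prop :=
  IsSeg s ∧ vol s = v ∧
    (∫ ω in {ω | m ω < 1 - Finv m v}, s ω ∂(cubeMeasure n)) = 0 ∧
    (∫ ω in {ω | m ω > 1 - Finv m v}, (1 - s ω) ∂(cubeMeasure n)) = 0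

instance cubeFinite (n : ℕ) : IsFiniteMeasure (cubeMeasure n) := by
  constructor
  rw [cubeMeasure, Measure.restrict_apply_univ, volume_pi_pi]
  simp [Real.volume_Icc]

lemma setint {n : ℕ} {S : Set (Fin n → ℝ)} (T : Set (Fin n → ℝ)) (hS : MeasurableSet S) :
    ∫ ω in T, S.indicator (fun _ => (1:ℝ)) ω ∂(cubeMeasure n)
      = ((cubeMeasure n) (S ∩ T)).toReal := by
  have := integral_indicator_const (μ := (cubeMeasure n).restrict T) (1:ℝ) hS
  rw [this, Measure.real, Measure.restrict_apply hS, smul_eq_mul, mul_one]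

theorem stmt15 {n : ℕ} {m : (Fin n → ℝ) → ℝ} (hm : IsMarg m)
    {t : ℝ} (ht : t ∈ Set.Ioc (0:ℝ) 1)
    {s : (Fin n → ℝ) → ℝ} (hs : IsSeg s) :
    (∃ v ∈ Set.Icc (FcdfMinus m t) (Fcdf m t), Smv m v s) ↔
      (∀ᵐ ω ∂(cubeMeasure n),
        Set.indicator {ω | 1 - t < m ω} (fun _ => (1:ℝ)) ω ≤ s ω ∧
        s ω ≤ Set.indicator {ω | 1 - t ≤ m ω} (fun _ => (1:ℝ)) ω) := by
  classical
  obtain ⟨hmMeas, _hm01⟩ := hm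
  obtain ⟨hsMeas, hs01⟩ := hs
  set μ := cubeMeasure n with hμdef
  set S₁ : Set (Fin n → ℝ) := {ω | s ω = 1} with hS₁def
  have hS₁m : MeasurableSet S₁ := hsMeas (measurableSet_singleton 1)
  set U : Set (Fin n → ℝ) := {ω | 1 - t < m ω} with hUdef
  set W : Set (Fin n → ℝ) := {ω | 1 - t ≤ m ω} with hWdef
  have hUm : MeasurableSet U := measurableSet_lt measurable_const hmMeas
  have hWm : MeasurableSet W := measurableSet_le measurable_const hmMeas
  have fNT : ∀ X : Set (Fin n → ℝ), μ X ≠ ⊤ := fun X => measure_ne_top μ X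
  -- representation of s as an indicator
  have hsind : s = S₁.indicator (fun _ => (1:ℝ)) := by
    funext ω
    rcases hs01 ω with h | h
    · rw [Set.indicator_of_notMem, h]
      simp only [hS₁def, mem_setOf_eq, h]; norm_num
    · rw [Set.indicator_of_mem]
      · exact h
      · simpa [hS₁def] using h
  have hsind2 : (fun ω => 1 - s ω) = (S₁ᶜ).indicator (fun _ => (1:ℝ)) := by
    funext ω
    rcases hs01 ω with h | h
    · rw [Set.indicator_of_mem]
      · rw [h]; ring
      · simp only [hS₁def, mem_compl_iff, mem_setOf_eq, h]; norm_num
    · rw [Set.indicator_of_notMem, h]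
      · ring
      · simpa [hS₁def] using h
  -- cdf values
  have hFc : Fcdf m t = (μ W).toReal := by
    have : {ω | 1 - m ω ≤ t} = W := by
      ext ω; simp only [hWdef, mem_setOf_eq]; constructor <;> intro <;> linarith
    rw [Fcdf, this]
  have hFcm : FcdfMinus m t = (μ U).toReal := by
    have : {ω | 1 - m ω < t} = U := by
      ext ω; simp only [hUdef, mem_setOf_eq]; constructor <;> intro <;> linarith
    rw [FcdfMinus, this]
  -- a.e. condition as two null sets
  have hae : (∀ᵐ ω ∂μ,
        Set.indicator U (fun _ => (1:ℝ)) ω ≤ s ω ∧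
        s ω ≤ Set.indicator W (fun _ => (1:ℝ)) ω) ↔
      (μ (U \ S₁) = 0 ∧ μ (S₁ \ W) = 0) := by
    constructor
    · intro h
      rw [ae_iff] at h
      constructor
      · refine measure_mono_null ?_ h
        intro ω hω
        simp only [mem_setOf_eq]
        intro hP
        have h1 : Set.indicator U (fun _ => (1:ℝ)) ω = 1 := Set.indicator_of_mem hω.1 _
        have h0 : s ω = 0 := by
          rcases hs01 ω with h' | h'
          · exact h'
          · exact absurd h' (by simpa [hS₁def] using hω.2)
        rw [h1, h0] at hP
        linarith [hP.1]
      · refine measure_mono_null ?_ h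
        intro ω hω
        simp only [mem_setOf_eq]
        intro hP
        have h1 : s ω = 1 := by simpa [hS₁def] using hω.1
        have h0 : Set.indicator W (fun _ => (1:ℝ)) ω = 0 := Set.indicator_of_notMem hω.2 _
        rw [h1, h0] at hP
        linarith [hP.2]
    · rintro ⟨h1, h2⟩
      filter_upwards [measure_eq_zero_iff_ae_notMem.mp h1, measure_eq_zero_iff_ae_notMem.mp h2]
        with ω hω1 hω2
      rcases hs01 ω with h | h
      · have hωU : ω ∉ U := fun hU => hω1 ⟨hU, by simp [hS₁def, h]⟩
        constructor
        · rw [Set.indicator_of_notMem hωU, h]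
        · rw [h]; exact Set.indicator_nonneg (by intros; norm_num) ω
      · have hωS : ω ∈ S₁ := by simpa [hS₁def] using h
        have hωW : ω ∈ W := by
          by_contra hW; exact hω2 ⟨hωS, hW⟩
        constructor
        · rw [h]
          by_cases hU : ω ∈ U
          · rw [Set.indicator_of_mem hU]
          · rw [Set.indicator_of_notMem hU]; norm_num
        · rw [h, Set.indicator_of_mem hωW]
    -- characterization of Smv
  have smv_iff : ∀ v : ℝ, Smv m v s ↔
      ((μ S₁).toReal = v ∧ μ ({ω | m ω < 1 - Finv m v} ∩ S₁) = 0 ∧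
        μ ({ω | m ω > 1 - Finv m v} \ S₁) = 0) := by
    intro v
    have e1 : vol s = (μ S₁).toReal := by
      rw [vol, hsind]
      rw [integral_indicator_const _ hS₁m, smul_eq_mul, mul_one]; rfl
    have e2 : ∀ T : Set (Fin n → ℝ), (∫ ω in T, s ω ∂μ) = (μ (S₁ ∩ T)).toReal := by
      intro T; rw [hsind]; exact setint T hS₁m
    have e3 : ∀ T : Set (Fin n → ℝ), (∫ ω in T, (1 - s ω) ∂μ) = (μ (T \ S₁)).toReal := by
      intro T
      have : (∫ ω in T, (1 - s ω) ∂μ) = ∫ ω in T, (S₁ᶜ).indicator (fun _ => (1:ℝ)) ω ∂μ := by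
        rw [← hsind2]
      rw [this, setint T hS₁m.compl]
      congr 1
      rw [Set.inter_comm, Set.diff_eq]
    constructor
    · rintro ⟨_, h1, h2, h3⟩
      refine ⟨by rw [← e1, h1], ?_, ?_⟩
      · rw [e2] at h2
        rcases (ENNReal.toReal_eq_zero_iff _).mp h2 with h | h
        · rwa [Set.inter_comm] at h
        · exact absurd h (fNT _)
      · rw [e3] at h3
        rcases (ENNReal.toReal_eq_zero_iff _).mp h3 with h | h
        · exact h
        · exact absurd h (fNT _)
    · rintro ⟨h1, h2, h3⟩
      refine ⟨⟨hsMeas, hs01⟩, by rw [e1, h1], ?_, ?_⟩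
      · rw [e2, Set.inter_comm, h2]; simp
      · rw [e3, h3]; simp
  -- Finv is at most t whenever v ≤ Fcdf m t
  have hFinv_le : ∀ v : ℝ, v ≤ Fcdf m t → Finv m v ≤ t := by
    intro v hv
    exact csInf_le ⟨0, fun x hx => hx.1.1⟩ ⟨⟨le_of_lt ht.1, ht.2⟩, hv⟩
  constructor
  · -- forward direction
    rintro ⟨v, ⟨hv1, hv2⟩, hSmv⟩
    rw [smv_iff] at hSmv
    obtain ⟨hvol, hlow, hhigh⟩ := hSmv
    set c := Finv m v with hcdef
    have hct : c ≤ t := hFinv_le v hv2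
    rw [hae]
    have hUS : μ (U \ S₁) = 0 := by
      rcases eq_or_lt_of_le hct with hc | hc
      · have hU : U = {ω | m ω > 1 - c} := by
          ext ω; simp only [hUdef, mem_setOf_eq, gt_iff_lt, hc]
        rw [hU]; exact hhigh
      · -- c < t
        set A : Set (Fin n → ℝ) := {ω | m ω > 1 - c} with hAdef
        set B : Set (Fin n → ℝ) := {ω | 1 - t < m ω ∧ m ω < 1 - c} with hBdef
        set C : Set (Fin n → ℝ) := {ω | m ω = 1 - c} with hCdef
        have hAm : MeasurableSet A := measurableSet_lt measurable_const hmMeas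
        have hBm : MeasurableSet B :=
          (measurableSet_lt measurable_const hmMeas).inter
            (measurableSet_lt hmMeas measurable_const)
        have hCm : MeasurableSet C := hmMeas (measurableSet_singleton _)
        have hABC : μ A + μ B + μ C ≤ μ U := by
          have hd1 : Disjoint A B := by
            rw [Set.disjoint_left]
            rintro ω hA hB
            simp only [hAdef, hBdef, mem_setOf_eq, gt_iff_lt] at hA hB
            linarith [hB.2]
          have hd2 : Disjoint (A ∪ B) C := by
            rw [Set.disjoint_left]
            rintro ω hAB hC
            simp only [hCdef, mem_setOf_eq] at hC
            rcases hAB with h | h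
            · simp only [hAdef, mem_setOf_eq, gt_iff_lt] at h; linarith
            · simp only [hBdef, mem_setOf_eq] at h; linarith [h.2]
          have hsub : (A ∪ B) ∪ C ⊆ U := by
            rintro ω ((h | h) | h)
            · simp only [hAdef, mem_setOf_eq, gt_iff_lt] at h
              simp only [hUdef, mem_setOf_eq]; linarith
            · exact h.1
            · simp only [hCdef, mem_setOf_eq] at h
              simp only [hUdef, mem_setOf_eq]; linarith
          calc μ A + μ B + μ C = μ ((A ∪ B) ∪ C) := by
                rw [measure_union hd2 hCm, measure_union hd1 hBm]
            _ ≤ μ U := measure_mono hsub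
        have hUleS : μ U ≤ μ S₁ := by
          rw [← ENNReal.toReal_le_toReal (fNT _) (fNT _), ← hFcm, hvol]
          exact hv1
        have hSle : μ S₁ ≤ μ A + μ (C ∩ S₁) := by
          have hsub : S₁ ⊆ A ∪ ((C ∩ S₁) ∪ ({ω | m ω < 1 - c} ∩ S₁)) := by
            intro ω hω
            rcases lt_trichotomy (m ω) (1 - c) with h | h | h
            · exact Or.inr (Or.inr ⟨h, hω⟩)
            · exact Or.inr (Or.inl ⟨h, hω⟩)
            · exact Or.inl h
          calc μ S₁ ≤ μ A + μ ((C ∩ S₁) ∪ ({ω | m ω < 1 - c} ∩ S₁)) :=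
                le_trans (measure_mono hsub) (measure_union_le _ _)
            _ ≤ μ A + (μ (C ∩ S₁) + μ ({ω | m ω < 1 - c} ∩ S₁)) :=
                add_le_add le_rfl (measure_union_le _ _)
            _ = μ A + μ (C ∩ S₁) := by rw [hlow, add_zero]
        have key : μ B + μ C ≤ μ (C ∩ S₁) := by
          have h := hABC.trans (hUleS.trans hSle)
          rwa [add_assoc, ENNReal.add_le_add_iff_left (fNT A)] at h
        have hB0 : μ B = 0 := by
          have h1 : μ C + μ B ≤ μ C + 0 := by
            rw [add_zero, add_comm]
            exact key.trans (measure_mono Set.inter_subset_left)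
          simpa using (ENNReal.add_le_add_iff_left (fNT C)).mp h1
        have hC0 : μ (C \ S₁) = 0 := by
          have h2 : μ (C ∩ S₁) + μ (C \ S₁) = μ C := measure_inter_add_diff C hS₁m
          have h3 : μ C ≤ μ (C ∩ S₁) := le_trans le_add_self key
          have h4 : μ (C ∩ S₁) + μ (C \ S₁) ≤ μ (C ∩ S₁) + 0 := by
            rw [add_zero]; exact h2.le.trans h3
          simpa using (ENNReal.add_le_add_iff_left (fNT _)).mp h4
        have hsub : U \ S₁ ⊆ (A \ S₁) ∪ (B ∪ (C \ S₁)) := by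
          rintro ω ⟨hωU, hωS⟩
          rcases lt_trichotomy (m ω) (1 - c) with h | h | h
          · exact Or.inr (Or.inl ⟨hωU, h⟩)
          · exact Or.inr (Or.inr ⟨h, hωS⟩)
          · exact Or.inl ⟨h, hωS⟩
        exact measure_mono_null hsub
          (measure_union_null hhigh (measure_union_null hB0 hC0))
    refine ⟨hUS, ?_⟩
    have hsub : S₁ \ W ⊆ {ω | m ω < 1 - c} ∩ S₁ := by
      rintro ω ⟨hωS, hωW⟩
      have : ¬ (1 - t ≤ m ω) := hωW
      refine ⟨?_, hωS⟩
      simp only [mem_setOf_eq]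
      linarith [not_le.mp this]
    exact measure_mono_null hsub hlow
  · -- reverse direction
    intro h
    rw [hae] at h
    obtain ⟨h1, h2⟩ := h
    set v := (μ S₁).toReal with hvdef
    have hSleW : μ S₁ ≤ μ W := by
      calc μ S₁ ≤ μ ((S₁ \ W) ∪ W) := measure_mono (fun ω hω => by
            by_cases hW : ω ∈ W
            · exact Or.inr hW
            · exact Or.inl ⟨hω, hW⟩)
        _ ≤ μ (S₁ \ W) + μ W := measure_union_le _ _
        _ = μ W := by rw [h2, zero_add]
    have hUleS : μ U ≤ μ S₁ := by
      calc μ U ≤ μ ((U \ S₁) ∪ S₁) := measure_mono (fun ω hω => by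
            by_cases hS : ω ∈ S₁
            · exact Or.inr hS
            · exact Or.inl ⟨hω, hS⟩)
        _ ≤ μ (U \ S₁) + μ S₁ := measure_union_le _ _
        _ = μ S₁ := by rw [h1, zero_add]
    have hvF : v ≤ Fcdf m t := by
      rw [hFc]; exact (ENNReal.toReal_le_toReal (fNT _) (fNT _)).mpr hSleW
    have hvFm : FcdfMinus m t ≤ v := by
      rw [hFcm]; exact (ENNReal.toReal_le_toReal (fNT _) (fNT _)).mpr hUleS
    set c := Finv m v with hcdef
    have hct : c ≤ t := hFinv_le v hvF
    -- key: for c < u < t, μ ({m < 1-u} ∩ S₁) = 0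
    have keylem : ∀ u : ℝ, c < u → u < t → μ ({ω | m ω < 1 - u} ∩ S₁) = 0 := by
      intro u hcu hut
      have hne : {x | x ∈ Set.Icc (0:ℝ) 1 ∧ v ≤ Fcdf m x}.Nonempty :=
        ⟨t, ⟨le_of_lt ht.1, ht.2⟩, hvF⟩
      obtain ⟨u', ⟨_, hu'F⟩, hu'u⟩ := exists_lt_of_csInf_lt hne hcu
      set Wu : Set (Fin n → ℝ) := {ω | 1 - u ≤ m ω} with hWudef
      have hWum : MeasurableSet Wu := measurableSet_le measurable_const hmMeas
      have hSleWu : μ S₁ ≤ μ Wu := by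
        have h5 : μ S₁ ≤ μ {ω | 1 - m ω ≤ u'} := by
          rw [← ENNReal.toReal_le_toReal (fNT _) (fNT _)]
          exact hu'F
        refine h5.trans (measure_mono ?_)
        intro ω hω
        simp only [mem_setOf_eq] at hω
        show ω ∈ {ω | 1 - u ≤ m ω}
        simp only [mem_setOf_eq]
        linarith
      have hWuU : Wu ⊆ U := by
        intro ω hω
        simp only [hWudef, mem_setOf_eq] at hω
        simp only [hUdef, mem_setOf_eq]
        linarith
      have hWuS : μ Wu = μ (Wu ∩ S₁) := by
        have := measure_inter_add_diff (μ := μ) Wu hS₁m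
        have hz : μ (Wu \ S₁) = 0 :=
          measure_mono_null (Set.diff_subset_diff_left hWuU) h1
        rw [← this, hz, add_zero]
      have hfinal : μ (S₁ ∩ Wu) + μ (S₁ \ Wu) ≤ μ (S₁ ∩ Wu) + 0 := by
        rw [add_zero, measure_inter_add_diff S₁ hWum, Set.inter_comm]
        exact hSleWu.trans_eq hWuS
      have : μ (S₁ \ Wu) = 0 := by
        simpa using (ENNReal.add_le_add_iff_left (fNT _)).mp hfinal
      refine measure_mono_null ?_ this
      rintro ω ⟨hω1, hω2⟩
      simp only [mem_setOf_eq] at hω1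
      exact ⟨hω2, by simp only [hWudef, mem_setOf_eq]; intro hc'; linarith⟩
    refine ⟨v, ⟨hvFm, hvF⟩, ?_⟩
    rw [smv_iff]
    refine ⟨rfl, ?_, ?_⟩
    · -- μ ({m < 1 - c} ∩ S₁) = 0 via rational covering
      set T : ℚ → Set (Fin n → ℝ) :=
        fun q => {ω | c < (q:ℝ) ∧ (q:ℝ) < t ∧ m ω < 1 - (q:ℝ)} ∩ S₁ with hTdef
      have hTnull : ∀ q : ℚ, μ (T q) = 0 := by
        intro q
        by_cases hq : c < (q:ℝ) ∧ (q:ℝ) < t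
        · refine measure_mono_null ?_ (keylem (q:ℝ) hq.1 hq.2)
          rintro ω ⟨hω1, hω2⟩
          exact ⟨hω1.2.2, hω2⟩
        · refine measure_mono_null (fun ω hω => absurd ⟨hω.1.1, hω.1.2.1⟩ hq)
            (measure_empty (μ := μ))
      have hcover : {ω | m ω < 1 - c} ∩ S₁ ⊆ (S₁ \ W) ∪ ⋃ q : ℚ, T q := by
        rintro ω ⟨hω1, hω2⟩
        simp only [mem_setOf_eq] at hω1
        by_cases hW : 1 - t ≤ m ω
        · right
          have hctlt : c < t := by linarith
          have hcm : c < 1 - m ω := by linarith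
          obtain ⟨q, hq1, hq2⟩ := exists_rat_btwn (lt_min hctlt hcm)
          exact Set.mem_iUnion.mpr ⟨q, ⟨hq1, (lt_min_iff.mp hq2).1, by
            linarith [(lt_min_iff.mp hq2).2]⟩, hω2⟩
        · exact Or.inl ⟨hω2, hW⟩
      exact measure_mono_null hcover
        (measure_union_null h2 (measure_iUnion_null hTnull))
    · -- μ ({m > 1 - c} \ S₁) = 0
      refine measure_mono_null ?_ h1
      rintro ω ⟨hω1, hω2⟩
      simp only [mem_setOf_eq, gt_iff_lt] at hω1
      exact ⟨by simp only [hUdef, mem_setOf_eq]; linarith, hω2⟩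
end
end

section
/- For any measurable m : Ω → [0,1], the maximal Accuracy sup_s A_m(s) equals 1 - ‖m‖₁ + ∫₀^{F_m(1/2)} (1 - 2F_m⁻¹(u)) du, and is attained by the segmentation s(ω) = 1{m(ω) ≥ 1/2}. -/
open MeasureTheory Set

noncomputable section

/-- Accuracy. -/
def Accu {n : ℕ} (m s : (Fin n → ℝ) → ℝ) : ℝ :=
  ∫ ω, (s ω * m ω + (1 - s ω) * (1 - m ω)) ∂(cubeMeasure n)

lemma cube_prob (n : ℕ) : IsProbabilityMeasure (cubeMeasure n) := by
  constructor
  rw [cubeMeasure, Measure.restrict_apply_univ, volume_pi_pi]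
  simp [Real.volume_Icc]

variable {n : ℕ} {m : (Fin n → ℝ) → ℝ}

lemma cube_ne_top (s : Set (Fin n → ℝ)) : cubeMeasure n s ≠ ⊤ := by
  haveI := cube_prob n
  exact measure_ne_top _ _

lemma Fcdf_nonneg (t : ℝ) : 0 ≤ Fcdf m t := ENNReal.toReal_nonneg

lemma Fcdf_mono {t t' : ℝ} (h : t ≤ t') : Fcdf m t ≤ Fcdf m t' :=
  ENNReal.toReal_mono (cube_ne_top _) (measure_mono fun ω hω => le_trans hω h)

lemma Fcdf_le_one (t : ℝ) : Fcdf m t ≤ 1 := by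
  haveI := cube_prob n
  rw [Fcdf, ← ENNReal.toReal_one]
  exact ENNReal.toReal_mono (by simp) (prob_le_one)

lemma Fcdf_one (hm : IsMarg m) : Fcdf m 1 = 1 := by
  haveI := cube_prob n
  have : {ω | 1 - m ω ≤ 1} = univ := by
    ext ω; simp only [mem_setOf_eq, mem_univ, iff_true]
    linarith [(hm.2 ω).1]
  rw [Fcdf, this, measure_univ, ENNReal.toReal_one]

lemma Finv_nonneg (v : ℝ) : 0 ≤ Finv m v :=
  Real.sInf_nonneg fun t ht => ht.1.1

lemma Finv_le {v t : ℝ} (ht : t ∈ Icc (0:ℝ) 1) (h : v ≤ Fcdf m t) : Finv m v ≤ t :=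
  csInf_le ⟨0, fun _ hx => hx.1.1⟩ ⟨ht, h⟩

lemma Finv_monoOn : MonotoneOn (Finv m) (Iic (Fcdf m (1/2))) := by
  intro u hu v hv huv
  apply csInf_le_csInf ⟨0, fun _ hx => hx.1.1⟩
  · exact ⟨1/2, ⟨by norm_num, by norm_num⟩, hv⟩
  · exact fun t ht => ⟨ht.1, le_trans huv ht.2⟩

/-- The key slice identity. -/
lemma slice_eq (hm : IsMarg m) {t : ℝ} (ht0 : 0 < t) (ht : t ≤ 1/2) :
    volume ({u : ℝ | Finv m u < t} ∩ Ioc 0 (Fcdf m (1/2)))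
      = cubeMeasure n {ω | 1 - m ω < t} := by
  set x : ℝ := ((cubeMeasure n) {ω | 1 - m ω < t}).toReal with hx
  have hxval : cubeMeasure n {ω | 1 - m ω < t} = ENNReal.ofReal x := by
    rw [hx, ENNReal.ofReal_toReal (cube_ne_top _)]
  have hxc : x ≤ Fcdf m (1/2) := by
    apply ENNReal.toReal_mono (cube_ne_top _)
    exact measure_mono fun ω hω => le_trans (le_of_lt hω) ht
  have hsub : {u : ℝ | Finv m u < t} ∩ Ioc 0 (Fcdf m (1/2)) ⊆ Ioc 0 x := by
    rintro u ⟨hFu, hu0, huc⟩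
    refine ⟨hu0, ?_⟩
    have hne : {t' | t' ∈ Icc (0:ℝ) 1 ∧ u ≤ Fcdf m t'}.Nonempty :=
      ⟨1/2, ⟨by norm_num, by norm_num⟩, huc⟩
    obtain ⟨t', ⟨ht'I, ht'F⟩, ht't⟩ := exists_lt_of_csInf_lt hne hFu
    calc u ≤ Fcdf m t' := ht'F
      _ ≤ x := ENNReal.toReal_mono (cube_ne_top _)
          (measure_mono fun ω hω => lt_of_le_of_lt hω ht't)
  have hsup : Ioo 0 x ⊆ {u : ℝ | Finv m u < t} ∩ Ioc 0 (Fcdf m (1/2)) := by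
    rintro u ⟨hu0, hux⟩
    have hiUnion : {ω | 1 - m ω < t} = ⋃ k : ℕ, {ω | 1 - m ω ≤ t - t/(k+1)} := by
      ext ω
      simp only [mem_setOf_eq, mem_iUnion]
      constructor
      · intro h
        have hpos : 0 < t - (1 - m ω) := by linarith
        obtain ⟨k, hk⟩ := exists_nat_one_div_lt (div_pos hpos ht0)
        refine ⟨k, ?_⟩
        rw [div_lt_div_iff₀ (by positivity) ht0] at hk
        have h2 : t / ((k:ℝ)+1) < t - (1 - m ω) := by
          rw [div_lt_iff₀ (by positivity)]
          nlinarith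
        linarith
      · rintro ⟨k, hk⟩
        have : (0:ℝ) < t / (k+1) := by positivity
        linarith
    have hmonoA : Monotone fun k : ℕ => {ω | 1 - m ω ≤ t - t/(k+1)} := by
      intro k l hkl ω hω
      simp only [mem_setOf_eq] at *
      have h1 : t/((l:ℝ)+1) ≤ t/((k:ℝ)+1) := by
        apply div_le_div_of_nonneg_left (le_of_lt ht0) (by positivity)
        have : ((k:ℝ)) ≤ (l:ℝ) := Nat.cast_le.mpr hkl
        linarith
      linarith
    have hmeas : ENNReal.ofReal u < cubeMeasure n {ω | 1 - m ω < t} := by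
      rw [hxval]
      exact (ENNReal.ofReal_lt_ofReal_iff (lt_of_le_of_lt (le_of_lt hu0) hux)).mpr hux
    rw [hiUnion, hmonoA.measure_iUnion] at hmeas
    obtain ⟨k, hk⟩ := lt_iSup_iff.mp hmeas
    have hk' : u ≤ Fcdf m (t - t/(k+1)) := le_of_lt <| by
      rw [Fcdf]
      exact (ENNReal.ofReal_lt_iff_lt_toReal (le_of_lt hu0) (cube_ne_top _)).mp hk
    have ht'0 : 0 ≤ t - t/(k+1) := by
      have : t/((k:ℝ)+1) ≤ t := by
        rw [div_le_iff₀ (by positivity)]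
        nlinarith [Nat.cast_nonneg (α := ℝ) k]
      linarith
    have ht't : t - t/(k+1) < t := by
      have : (0:ℝ) < t/(k+1) := by positivity
      linarith
    refine ⟨?_, hu0, le_trans (le_of_lt hux) hxc⟩
    exact lt_of_le_of_lt (Finv_le ⟨ht'0, by linarith⟩ hk') ht't
  have h1 : volume ({u : ℝ | Finv m u < t} ∩ Ioc 0 (Fcdf m (1/2))) ≤ ENNReal.ofReal x := by
    calc _ ≤ volume (Ioc 0 x) := measure_mono hsub
      _ = ENNReal.ofReal x := by rw [Real.volume_Ioc, sub_zero]
  have h2 : ENNReal.ofReal x ≤ volume ({u : ℝ | Finv m u < t} ∩ Ioc 0 (Fcdf m (1/2))) := by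
    calc ENNReal.ofReal x = volume (Ioo 0 x) := by rw [Real.volume_Ioo, sub_zero]
      _ ≤ _ := measure_mono hsup
  rw [le_antisymm h1 h2, hxval]

lemma integrable_bounded_one {f : (Fin n → ℝ) → ℝ} (hf : Measurable f)
    (hb : ∀ ω, |f ω| ≤ 1) : Integrable f (cubeMeasure n) := by
  haveI := cube_prob n
  exact Integrable.mono' (integrable_const 1) hf.aestronglyMeasurable
    (Filter.Eventually.of_forall fun ω => by simpa using hb ω)

lemma keyB (hm : IsMarg m) :
    ∫ ω, max (2 * m ω - 1) 0 ∂(cubeMeasure n)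
      = ∫ u in (0:ℝ)..(Fcdf m (1/2)), (1 - 2 * Finv m u) := by
  haveI := cube_prob n
  set c : ℝ := Fcdf m (1/2) with hc
  have hc0 : 0 ≤ c := Fcdf_nonneg _
  -- LHS layer cake
  have hfmeas : Measurable fun ω => max (2 * m ω - 1) 0 :=
    ((hm.1.const_mul 2).sub_const 1).max measurable_const
  have hfint : Integrable (fun ω => max (2 * m ω - 1) 0) (cubeMeasure n) := by
    apply integrable_bounded_one hfmeas
    intro ω
    rw [abs_le]
    constructor
    · have := le_max_right (2 * m ω - 1) 0; linarith
    · have h1 := (hm.2 ω).2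
      exact max_le (by linarith) (by norm_num)
  have hLHS := hfint.integral_eq_integral_meas_lt
    (Filter.Eventually.of_forall fun ω => le_max_right _ _)
  -- RHS layer cake
  have hFinvLe : ∀ u ∈ Ioc (0:ℝ) c, Finv m u ≤ 1/2 := fun u hu =>
    Finv_le ⟨by norm_num, by norm_num⟩ hu.2
  have hhmeas : AEMeasurable (fun u => 1 - 2 * Finv m u) (volume.restrict (Ioc 0 c)) := by
    have : AntitoneOn (fun u => 1 - 2 * Finv m u) (Ioc 0 c) := by
      intro u hu v hv huv
      have := Finv_monoOn (mem_Iic.mpr hu.2) (mem_Iic.mpr hv.2) huv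
      simp only
      linarith
    exact aemeasurable_restrict_of_antitoneOn measurableSet_Ioc this
  have hhnn : 0 ≤ᵐ[volume.restrict (Ioc 0 c)] fun u => 1 - 2 * Finv m u := by
    filter_upwards [ae_restrict_mem measurableSet_Ioc] with u hu
    have := hFinvLe u hu
    simp only [Pi.zero_apply]
    linarith
  have hhint : Integrable (fun u => 1 - 2 * Finv m u) (volume.restrict (Ioc 0 c)) := by
    apply Integrable.mono' (integrable_const 1) hhmeas.aestronglyMeasurable
    filter_upwards [ae_restrict_mem measurableSet_Ioc] with u hu
    have h1 := hFinvLe u hu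
    have h2 := Finv_nonneg (m := m) u
    rw [Real.norm_eq_abs, abs_le]
    constructor <;> linarith
  have hRHS := hhint.integral_eq_integral_meas_lt hhnn
  rw [intervalIntegral.integral_of_le hc0, hRHS, hLHS]
  apply setIntegral_congr_fun measurableSet_Ioi
  intro r hr
  simp only [mem_Ioi] at hr
  dsimp only
  simp only [Measure.real]
  congr 1
  by_cases hr1 : 1 ≤ r
  · have e1 : {ω | r < max (2 * m ω - 1) 0} = ∅ := by
      ext ω
      simp only [mem_setOf_eq, mem_empty_iff_false, iff_false, not_lt]
      have := (hm.2 ω).2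
      exact max_le (by linarith) (by linarith)
    have e2 : {u : ℝ | r < 1 - 2 * Finv m u} = ∅ := by
      ext u
      simp only [mem_setOf_eq, mem_empty_iff_false, iff_false, not_lt]
      have := Finv_nonneg (m := m) u
      linarith
    rw [e1, e2]
    simp
  · push_neg at hr1
    have ht0 : 0 < (1 - r)/2 := by linarith
    have ht : (1 - r)/2 ≤ 1/2 := by linarith
    have e1 : {ω | r < max (2 * m ω - 1) 0} = {ω | 1 - m ω < (1 - r)/2} := by
      ext ω
      simp only [mem_setOf_eq, lt_max_iff]
      constructor
      · rintro (h | h)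
        · linarith
        · linarith
      · intro h; left; linarith
    have e2 : {u : ℝ | r < 1 - 2 * Finv m u} = {u : ℝ | Finv m u < (1 - r)/2} := by
      ext u
      simp only [mem_setOf_eq]
      constructor <;> intro h <;> linarith
    rw [e1, e2, Measure.restrict_apply' measurableSet_Ioc, slice_eq hm ht0 ht]

lemma accu_ind (hm : IsMarg m) :
    Accu m (Set.indicator {ω | (1:ℝ)/2 ≤ m ω} (fun _ => (1:ℝ)))
      = ∫ ω, ((1 - m ω) + max (2 * m ω - 1) 0) ∂(cubeMeasure n) := by
  apply integral_congr_ae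
  apply Filter.Eventually.of_forall
  intro ω
  simp only [Set.indicator_apply, mem_setOf_eq]
  by_cases h : (1:ℝ)/2 ≤ m ω
  · rw [if_pos h, max_eq_left (by linarith)]
    ring
  · rw [if_neg h, max_eq_right (by push_neg at h; linarith)]
    ring

theorem stmt19 {n : ℕ} {m : (Fin n → ℝ) → ℝ} (hm : IsMarg m) :
    (Accu m (Set.indicator {ω | (1:ℝ)/2 ≤ m ω} (fun _ => (1:ℝ))) =
      1 - vol m + ∫ u in (0:ℝ)..(Fcdf m (1/2)), (1 - 2 * Finv m u)) ∧
    ∀ s, IsSeg s →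
      Accu m s ≤ Accu m (Set.indicator {ω | (1:ℝ)/2 ≤ m ω} (fun _ => (1:ℝ))) := by
  haveI := cube_prob n
  have hmint : Integrable m (cubeMeasure n) :=
    integrable_bounded_one hm.1 fun ω => abs_le.mpr ⟨by linarith [(hm.2 ω).1], (hm.2 ω).2⟩
  have h1mint : Integrable (fun ω => 1 - m ω) (cubeMeasure n) :=
    (integrable_const 1).sub hmint
  have hfmeas : Measurable fun ω => max (2 * m ω - 1) 0 :=
    ((hm.1.const_mul 2).sub_const 1).max measurable_const
  have hfint : Integrable (fun ω => max (2 * m ω - 1) 0) (cubeMeasure n) := by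
    apply integrable_bounded_one hfmeas
    intro ω
    rw [abs_le]
    refine ⟨?_, max_le (by linarith [(hm.2 ω).2]) (by norm_num)⟩
    have := le_max_right (2 * m ω - 1) 0; linarith
  have hsum : ∫ ω, ((1 - m ω) + max (2 * m ω - 1) 0) ∂(cubeMeasure n)
      = 1 - vol m + ∫ ω, max (2 * m ω - 1) 0 ∂(cubeMeasure n) := by
    rw [integral_add h1mint hfint, integral_sub (integrable_const 1) hmint]
    simp [vol]
  constructor
  · rw [accu_ind hm, hsum, keyB hm]
  · intro s hs
    rw [accu_ind hm, Accu]
    apply integral_mono_of_nonneg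
    · apply Filter.Eventually.of_forall
      intro ω
      dsimp only [Pi.zero_apply]
      rcases hs.2 ω with h | h <;> rw [h] <;>
        nlinarith [(hm.2 ω).1, (hm.2 ω).2]
    · exact h1mint.add hfint
    · apply Filter.Eventually.of_forall
      intro ω
      have h2 := le_max_right (2 * m ω - 1) 0
      have h3 := le_max_left (2 * m ω - 1) 0
      dsimp only
      rcases hs.2 ω with h | h <;> rw [h] <;> nlinarith
end
end
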